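/- arXiv:2208.14422 — 2 statements merged into one kernel-verified Lean document; each statement's English description precedes it below -/
import Mathlib

section
/- Fix an integer d ≥ 2. Consider systems A'₁, A₁, A'₂, A₂, Ã₁, B₁, Ã₂, B₂, each with Hilbert space ℂ^d, in the global state ψ⁺_{A'₁A₁} ⊗ ψ⁺_{A'₂A₂} ⊗ ψ⁺_{Ã₁B₁} ⊗ ψ⁺_{Ã₂B₂}. There exist a POVM {M_i}_{i=1}^{d²} on A₁ ⊗ A₂ ⊗ Ã₁ ⊗ Ã₂ and, for each i and each x ∈ {1,2}, unitaries U_i^{(x)} on B₁ ⊗ B₂ such that the two entanglement fidelities F_x = Σ_{i=1}^{d²} tr[(ψ⁺_{A'ₓBₓ} ⊗ I_rest)(I ⊗ U_i^{(x)})(M_i ⊗ I)(ψ⁺_{A'₁A₁} ⊗ ψ⁺_{A'₂A₂} ⊗ ψ⁺_{Ã₁B₁} ⊗ ψ⁺_{Ã₂B₂})(I ⊗ U_i^{(x)†})] satisfy F₁ = 1 and F₂ = 1/d²; in particular the average success probability (F₁ + F₂)/2 equals (1/2)(1 + 1/d²). Hence the NS-QRAC with two shared d-dimensional maximally entangled states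 and 2 log d bits of classical communication admits a quantum strategy with success probability (1/2)(1 + 1/d²). -/
open Matrix BigOperators ComplexOrder

noncomputable section

/-- The maximally entangled state `|ψ⁺⟩ = (1/√d) Σᵢ |i⟩ ⊗ |i⟩` on `ℂ^d ⊗ ℂ^d`. -/
def mes (d : ℕ) : Fin d × Fin d → ℂ :=
  fun p => if p.1 = p.2 then ((1 / Real.sqrt d : ℝ) : ℂ) else 0

/-- The rank-one projector `ψ⁺ = |ψ⁺⟩⟨ψ⁺|` onto the maximally entangled state. -/
def mesProj (d : ℕ) : Matrix (Fin d × Fin d) (Fin d × Fin d) ℂ :=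
  Matrix.of fun p q => mes d p * (starRingEnd ℂ) (mes d q)

/-- Index type for the eight systems: the first component records, for each `x : Fin 2`,
the pair `(A'ₓ, Aₓ)`; the second records, for each `x : Fin 2`, the pair `(Ãₓ, Bₓ)`. -/
abbrev E8 (d : ℕ) := (Fin 2 → Fin d × Fin d) × (Fin 2 → Fin d × Fin d)

/-- The global state `ψ⁺_{A'₁A₁} ⊗ ψ⁺_{A'₂A₂} ⊗ ψ⁺_{Ã₁B₁} ⊗ ψ⁺_{Ã₂B₂}`. -/
def globalState (d : ℕ) : Matrix (E8 d) (E8 d) ℂ :=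
  Matrix.of fun v w =>
    (∏ x : Fin 2, mesProj d (v.1 x) (w.1 x)) * ∏ x : Fin 2, mesProj d (v.2 x) (w.2 x)

/-- A POVM element `M` on `A₁ ⊗ A₂ ⊗ Ã₁ ⊗ Ã₂` embedded as `M ⊗ I` on the global space. -/
def bigM (d : ℕ)
    (M : Matrix ((Fin 2 → Fin d) × (Fin 2 → Fin d)) ((Fin 2 → Fin d) × (Fin 2 → Fin d)) ℂ) :
    Matrix (E8 d) (E8 d) ℂ :=
  Matrix.of fun v w =>
    M (fun x => (v.1 x).2, fun x => (v.2 x).1) (fun x => (w.1 x).2, fun x => (w.2 x).1) *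
      (if (∀ x, (v.1 x).1 = (w.1 x).1) ∧ (∀ x, (v.2 x).2 = (w.2 x).2) then 1 else 0)

/-- An operator `V` on `B₁ ⊗ B₂` embedded as `I ⊗ V` on the global space. -/
def bigU (d : ℕ) (V : Matrix (Fin 2 → Fin d) (Fin 2 → Fin d) ℂ) :
    Matrix (E8 d) (E8 d) ℂ :=
  Matrix.of fun v w =>
    (if (∀ x, v.1 x = w.1 x) ∧ (∀ x, (v.2 x).1 = (w.2 x).1) then 1 else 0) *
      V (fun x => (v.2 x).2) (fun x => (w.2 x).2)

/-- The projector `ψ⁺_{A'ₓBₓ} ⊗ I_rest` on the global space. -/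
def bigPsi (d : ℕ) (x : Fin 2) : Matrix (E8 d) (E8 d) ℂ :=
  Matrix.of fun v w =>
    mesProj d ((v.1 x).1, (v.2 x).2) ((w.1 x).1, (w.2 x).2) *
      (if (∀ y, (v.1 y).2 = (w.1 y).2) ∧ (∀ y, (v.2 y).1 = (w.2 y).1) ∧
          (∀ y, y ≠ x → (v.1 y).1 = (w.1 y).1) ∧ (∀ y, y ≠ x → (v.2 y).2 = (w.2 y).2)
        then 1 else 0)

/-- The entanglement fidelity `F_x` of the NS-QRAC strategy `(M, U)` for Bob's choice `x`. -/
def fid (d k : ℕ)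
    (M : Fin k → Matrix ((Fin 2 → Fin d) × (Fin 2 → Fin d)) ((Fin 2 → Fin d) × (Fin 2 → Fin d)) ℂ)
    (U : Fin k → Fin 2 → Matrix (Fin 2 → Fin d) (Fin 2 → Fin d) ℂ) (x : Fin 2) : ℝ :=
  (∑ i, Matrix.trace
      (bigPsi d x * bigU d (U i x) * bigM d (M i) * globalState d * bigU d (U i x)ᴴ)).re

namespace NSQ

/-! ### Generic helpers -/

lemma sum_eq_sum_comp {α β M : Type*} [Fintype α] [Fintype β] [DecidableEq β] [AddCommMonoid M]
    (g : α → β) (hg : Function.Injective g) (F : β → M)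
    (h : ∀ b : β, (∀ a, b ≠ g a) → F b = 0) :
    ∑ b, F b = ∑ a, F (g a) := by
  classical
  calc ∑ b, F b = ∑ b ∈ Finset.univ.image g, F b := by
        refine (Finset.sum_subset (Finset.subset_univ _) fun b _ hb => ?_).symm
        refine h b fun a he => hb ?_
        rw [he]
        exact Finset.mem_image_of_mem g (Finset.mem_univ a)
    _ = ∑ a, F (g a) := Finset.sum_image (fun x _ y _ hxy => hg hxy)

lemma trace_outer {n : Type*} [Fintype n] (A B : Matrix n n ℂ) (u : n → ℂ) :
    Matrix.trace (A * Matrix.of (fun v w => u v * (starRingEnd ℂ) (u w)) * B) =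
      ∑ i, (A *ᵥ u) i * (starRingEnd ℂ) ((Bᴴ *ᵥ u) i) := by
  simp only [Matrix.trace, Matrix.diag, Matrix.mul_apply, Matrix.of_apply, Matrix.mulVec,
    dotProduct, Matrix.conjTranspose_apply, map_sum, _root_.map_mul, Complex.conj_conj,
    Complex.star_def, Finset.sum_mul, Finset.mul_sum]
  rw [Finset.sum_comm]
  rw [Finset.sum_comm]
  refine Finset.sum_congr rfl fun a _ => ?_
  refine Finset.sum_congr rfl fun b _ => Finset.sum_congr rfl fun c _ => ?_
  ring

lemma sum_fun2 {β : Type*} [Fintype β] {M : Type*} [AddCommMonoid M] (F : (Fin 2 → β) → M) :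
    ∑ f : Fin 2 → β, F f = ∑ x : β, ∑ y : β, F ![x, y] := by
  rw [← (finTwoArrowEquiv β).symm.sum_comp F, Fintype.sum_prod_type]
  rfl

lemma eq_two {β : Type*} (f : Fin 2 → β) (x y : β) : f = ![x, y] ↔ f 0 = x ∧ f 1 = y := by
  constructor
  · rintro rfl; simp
  · rintro ⟨h0, h1⟩; funext i; fin_cases i <;> simpa

lemma fun2_ext {β : Type*} {f g : Fin 2 → β} : f = g ↔ f 0 = g 0 ∧ f 1 = g 1 := by
  constructor
  · rintro rfl; exact ⟨rfl, rfl⟩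
  · rintro ⟨h0, h1⟩; funext i; fin_cases i <;> assumption

lemma e8_ext {d : ℕ} {v w : E8 d} (h1 : ∀ x, v.1 x = w.1 x) (h2 : ∀ x, v.2 x = w.2 x) :
    v = w :=
  Prod.ext (funext h1) (funext h2)

/-! ### The root of unity -/

variable (d : ℕ)

def ζ : ℂ := Complex.exp (2 * Real.pi * Complex.I / d)

lemma ζ_ne_zero : ζ d ≠ 0 := Complex.exp_ne_zero _

lemma conj_ζ : (starRingEnd ℂ) (ζ d) = (ζ d)⁻¹ := by
  rw [ζ, ← Complex.exp_conj, ← Complex.exp_neg]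
  congr 1
  rw [map_div₀, _root_.map_mul, _root_.map_mul, Complex.conj_I, Complex.conj_ofReal,
    Complex.conj_ofNat, map_natCast]
  ring_nf

lemma conj_ζ_pow (n : ℕ) : (starRingEnd ℂ) (ζ d ^ n) = (ζ d)⁻¹ ^ n := by
  rw [map_pow, conj_ζ]

lemma ζ_mul_conj (n : ℕ) : ζ d ^ n * (starRingEnd ℂ) (ζ d ^ n) = 1 := by
  rw [conj_ζ_pow, ← mul_pow, mul_inv_cancel₀ (ζ_ne_zero d), one_pow]

lemma ζ_mul_conj2 (n : ℕ) : ζ d ^ n * ((starRingEnd ℂ) (ζ d)) ^ n = 1 := by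
  have := ζ_mul_conj d n
  rwa [map_pow] at this

lemma ζ_pow_d (hd : d ≠ 0) : ζ d ^ d = 1 :=
  (Complex.isPrimitiveRoot_exp d hd).pow_eq_one

lemma ζ_pow_inj (hd : d ≠ 0) {j k : Fin d} (h : ζ d ^ (j : ℕ) = ζ d ^ (k : ℕ)) : j = k :=
  Fin.val_injective ((Complex.isPrimitiveRoot_exp d hd).pow_inj j.isLt k.isLt h)

lemma sum_char (hd : d ≠ 0) (j k : Fin d) :
    ∑ b : Fin d, ζ d ^ ((b : ℕ) * (j : ℕ)) * (starRingEnd ℂ) (ζ d ^ ((b : ℕ) * (k : ℕ))) =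
      if j = k then (d : ℂ) else 0 := by
  have key : ∀ b : Fin d, ζ d ^ ((b : ℕ) * (j : ℕ)) * (starRingEnd ℂ) (ζ d ^ ((b : ℕ) * (k : ℕ)))
      = (ζ d ^ (j : ℕ) * ((ζ d)⁻¹) ^ (k : ℕ)) ^ (b : ℕ) := by
    intro b
    rw [conj_ζ_pow, mul_pow, ← pow_mul, ← pow_mul, mul_comm (j:ℕ), mul_comm (k:ℕ)]
  simp only [key]
  set z := ζ d ^ (j : ℕ) * ((ζ d)⁻¹) ^ (k : ℕ) with hz
  rw [Fin.sum_univ_eq_sum_range (fun b => z ^ b) d]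
  by_cases hjk : j = k
  · subst hjk
    have : z = 1 := by
      rw [hz, inv_pow, mul_inv_cancel₀ (pow_ne_zero _ (ζ_ne_zero d))]
    simp [this]
  · have hz1 : z ≠ 1 := by
      intro h
      apply hjk
      apply ζ_pow_inj d hd
      have := congrArg (· * ζ d ^ (k : ℕ)) h
      simpa [hz, inv_pow, mul_assoc, inv_mul_cancel₀ (pow_ne_zero (k:ℕ) (ζ_ne_zero d))] using this
    rw [geom_sum_eq hz1]
    have hzd : z ^ d = 1 := by
      rw [hz, mul_pow, ← pow_mul, ← pow_mul, mul_comm (j:ℕ) d, mul_comm (k:ℕ) d,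
        pow_mul, pow_mul, ζ_pow_d d hd, inv_pow, ζ_pow_d d hd]
      simp
    rw [hzd]
    simp [hjk]

/-! ### The Bell vectors and constants -/

def cc : ℂ := ((1 / Real.sqrt d : ℝ) : ℂ)

lemma conj_cc : (starRingEnd ℂ) (cc d) = cc d := Complex.conj_ofReal _

lemma cc_sq (hd : d ≠ 0) : cc d * cc d * d = 1 := by
  have h0 : (0:ℝ) ≤ d := Nat.cast_nonneg d
  have h : (1 / Real.sqrt d : ℝ) * (1 / Real.sqrt d : ℝ) * d = 1 := by
    rw [div_mul_div_comm, Real.mul_self_sqrt h0, one_mul]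
    field_simp
  calc cc d * cc d * d
      = (((1 / Real.sqrt d : ℝ) * (1 / Real.sqrt d : ℝ) * d : ℝ) : ℂ) := by
        rw [cc]; push_cast; ring
    _ = 1 := by rw [h]; norm_num

lemma mes_diag (x : Fin d) : mes d (x, x) = cc d := by simp [mes, cc]

lemma conj_mes (p : Fin d × Fin d) : (starRingEnd ℂ) (mes d p) = mes d p := by
  by_cases h : p.1 = p.2 <;> simp [mes, h, Complex.conj_ofReal]

def phi (a b : Fin d) : Fin d × Fin d → ℂ :=
  fun p => if p.2 = p.1 + a then cc d * ζ d ^ ((b : ℕ) * ((p.1 : ℕ))) else 0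

lemma sum_phi (hd : d ≠ 0) (p q : Fin d × Fin d) :
    ∑ a : Fin d, ∑ b : Fin d, phi d a b p * (starRingEnd ℂ) (phi d a b q) =
      if p = q then 1 else 0 := by
  haveI : NeZero d := ⟨hd⟩
  have step : ∀ a b : Fin d, phi d a b p * (starRingEnd ℂ) (phi d a b q) =
      ((if a = p.2 - p.1 then 1 else 0) * (if a = q.2 - q.1 then 1 else 0)) *
      (cc d * cc d *
        (ζ d ^ ((b : ℕ) * ((p.1 : ℕ))) * (starRingEnd ℂ) (ζ d ^ ((b : ℕ) * ((q.1 : ℕ)))))) := by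
    intro a b
    have h1 : (p.2 = p.1 + a) = (a = p.2 - p.1) := by
      apply propext; constructor
      · intro h; rw [h]; abel
      · intro h; rw [h]; abel
    have h2 : (q.2 = q.1 + a) = (a = q.2 - q.1) := by
      apply propext; constructor
      · intro h; rw [h]; abel
      · intro h; rw [h]; abel
    simp only [phi, h1, h2]
    split_ifs <;>
      simp only [_root_.map_mul, map_zero, conj_cc, mul_zero, zero_mul] <;> ring
  simp only [step]
  have inner : ∀ a : Fin d,
      (∑ b : Fin d, ((if a = p.2 - p.1 then (1:ℂ) else 0) * (if a = q.2 - q.1 then 1 else 0)) *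
      (cc d * cc d *
        (ζ d ^ ((b : ℕ) * ((p.1 : ℕ))) * (starRingEnd ℂ) (ζ d ^ ((b : ℕ) * ((q.1 : ℕ))))))) =
      ((if a = p.2 - p.1 then (1:ℂ) else 0) * (if a = q.2 - q.1 then 1 else 0)) *
        (if p.1 = q.1 then 1 else 0) := by
    intro a
    rw [← Finset.mul_sum, ← Finset.mul_sum, sum_char d hd]
    by_cases h : p.1 = q.1
    · simp only [h, if_true]
      rw [cc_sq d hd]
    · simp [h]
  rw [Finset.sum_congr rfl fun a _ => inner a]
  rw [← Finset.sum_mul]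
  have sdd : ∑ a : Fin d, (if a = p.2 - p.1 then (1:ℂ) else 0) * (if a = q.2 - q.1 then 1 else 0) =
      if p.2 - p.1 = q.2 - q.1 then 1 else 0 := by
    simp only [ite_mul, one_mul, zero_mul, Finset.sum_ite_eq', Finset.mem_univ, if_true]
  rw [sdd]
  by_cases h1 : p.1 = q.1
  · by_cases h2 : p.2 = q.2
    · have he : p.2 - p.1 = q.2 - q.1 := by rw [h1, h2]
      have hpq : p = q := Prod.ext h1 h2
      simp [he, hpq, h1]
    · have he : p.2 - p.1 ≠ q.2 - q.1 := by
        intro h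
        apply h2
        have := congrArg (· + p.1) h
        simpa [sub_add_cancel, h1] using this
      have hpq : p ≠ q := by intro h; exact h2 (congrArg Prod.snd h)
      simp [he, hpq]
  · have hpq : p ≠ q := by intro h; exact h1 (congrArg Prod.fst h)
    simp [h1, hpq]

/-! ### The POVM -/

abbrev Idx := (Fin 2 → Fin d) × (Fin 2 → Fin d)

lemma idx_ext {v w : Idx d} :
    v = w ↔ (v.1 0 = w.1 0 ∧ v.1 1 = w.1 1) ∧ (v.2 0 = w.2 0 ∧ v.2 1 = w.2 1) := by
  constructor
  · rintro rfl; exact ⟨⟨rfl, rfl⟩, ⟨rfl, rfl⟩⟩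
  · rintro ⟨⟨a, b⟩, c, e⟩
    refine Prod.ext (funext fun i => ?_) (funext fun i => ?_) <;> fin_cases i <;> assumption

def MA (a b : Fin d) : Matrix (Idx d) (Idx d) ℂ :=
  Matrix.of fun v w =>
    phi d a b (v.1 0, v.2 0) * (starRingEnd ℂ) (phi d a b (w.1 0, w.2 0)) *
      ((if v.1 1 = w.1 1 then 1 else 0) * (if v.2 1 = w.2 1 then 1 else 0))

lemma MA_sum (hd : d ≠ 0) : ∑ a : Fin d, ∑ b : Fin d, MA d a b = 1 := by
  ext v w
  simp only [Matrix.sum_apply, MA, Matrix.of_apply]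
  rw [show (∑ a : Fin d, ∑ b : Fin d, phi d a b (v.1 0, v.2 0) *
      (starRingEnd ℂ) (phi d a b (w.1 0, w.2 0)) *
      ((if v.1 1 = w.1 1 then 1 else 0) * (if v.2 1 = w.2 1 then 1 else 0))) =
      (∑ a : Fin d, ∑ b : Fin d, phi d a b (v.1 0, v.2 0) *
      (starRingEnd ℂ) (phi d a b (w.1 0, w.2 0))) *
      ((if v.1 1 = w.1 1 then 1 else 0) * (if v.2 1 = w.2 1 then 1 else 0)) by
    rw [Finset.sum_mul]; exact Finset.sum_congr rfl fun a _ => by rw [Finset.sum_mul]]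
  rw [sum_phi d hd]
  rw [Matrix.one_apply]
  by_cases h : v = w
  · subst h; simp
  · rw [if_neg h]
    by_cases h0 : ((v.1 0, v.2 0) : Fin d × Fin d) = (w.1 0, w.2 0)
    · rw [Prod.ext_iff] at h0
      obtain ⟨ha, hb⟩ := h0
      have hor : ¬(v.1 1 = w.1 1) ∨ ¬(v.2 1 = w.2 1) := by
        by_contra hc
        push_neg at hc
        exact h ((idx_ext d).mpr ⟨⟨ha, hc.1⟩, hb, hc.2⟩)
      rcases hor with h1 | h1 <;> simp [h1]
    · simp [h0]

def Bm (a b : Fin d) : Matrix (Idx d) (Idx d) ℂ :=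
  Matrix.of fun u v =>
    (starRingEnd ℂ) (phi d a b (v.1 0, v.2 0)) *
      (if (u.1 1 = v.1 1 ∧ u.2 1 = v.2 1) ∧ u.1 0 = u.1 1 ∧ u.2 0 = u.2 1 then 1 else 0)

lemma MA_eq (a b : Fin d) : MA d a b = (Bm d a b)ᴴ * Bm d a b := by
  ext v w
  rw [Matrix.mul_apply]
  rw [Fintype.sum_eq_single ((![v.1 1, v.1 1], ![v.2 1, v.2 1]) : Idx d)]
  · simp only [Matrix.conjTranspose_apply, Bm, Matrix.of_apply, Matrix.cons_val_zero,
      Matrix.cons_val_one, Matrix.head_cons, and_self, and_true, if_true, star_mul',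
      star_one, star_zero, Complex.star_def, Complex.conj_conj, MA]
    split_ifs with h1 h2 h3 h4 h5 <;> try tauto
    all_goals ring
  · intro u hu
    by_cases h1 : (u.1 1 = v.1 1 ∧ u.2 1 = v.2 1) ∧ u.1 0 = u.1 1 ∧ u.2 0 = u.2 1
    · exfalso
      apply hu
      obtain ⟨⟨ha, hb⟩, hc, he⟩ := h1
      refine (idx_ext d).mpr ⟨⟨?_, ?_⟩, ?_, ?_⟩ <;> simp [ha, hb, hc, he]
    · simp [Bm, h1]

lemma MA_psd (a b : Fin d) : (MA d a b).PosSemidef := by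
  rw [MA_eq]
  exact Matrix.posSemidef_conjTranspose_mul_self _

/-! ### The unitaries -/

def UB (a b : Fin d) : Matrix (Fin 2 → Fin d) (Fin 2 → Fin d) ℂ :=
  Matrix.of fun s t =>
    (if t 0 = s 0 + a then ζ d ^ ((b : ℕ) * ((s 0 : ℕ))) else 0) * (if t 1 = s 1 then 1 else 0)

lemma UB_unitary (hd : d ≠ 0) (a b : Fin d) :
    UB d a b ∈ Matrix.unitaryGroup (Fin 2 → Fin d) ℂ := by
  haveI : NeZero d := ⟨hd⟩
  rw [Matrix.mem_unitaryGroup_iff]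
  ext s s'
  rw [Matrix.mul_apply]
  rw [Fintype.sum_eq_single (![s 0 + a, s 1] : Fin 2 → Fin d)]
  · simp only [UB, Matrix.star_apply, Matrix.of_apply, Matrix.cons_val_zero, Matrix.cons_val_one,
      Matrix.head_cons, if_true, star_mul', star_one, star_zero, apply_ite (star : ℂ → ℂ),
      Complex.star_def, mul_one, Matrix.one_apply]
    by_cases h0 : s' 0 = s 0
    · by_cases h1 : s' 1 = s 1
      · have : s = s' := by rw [fun2_ext]; exact ⟨h0.symm, h1.symm⟩
        simp [h0, h1, ← this, ζ_mul_conj2]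
      · have h1' : ¬ s 1 = s' 1 := fun h => h1 h.symm
        have : s ≠ s' := fun h => h1 (by rw [h])
        simp [h1', this]
    · have hne : s 0 + a ≠ s' 0 + a := fun h => h0 (by exact (add_left_injective a h).symm)
      have : s ≠ s' := fun h => h0 (by rw [h])
      simp [hne, this]
  · intro t ht
    by_cases h0 : t 0 = s 0 + a
    · by_cases h1 : t 1 = s 1
      · exact absurd ((eq_two t _ _).mpr ⟨h0, h1⟩) ht
      · simp [UB, h1]
    · simp [UB, h0]

end NSQ

namespace NSQ
variable (d : ℕ)

/-! ### The global state as an outer product -/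

def gv : E8 d → ℂ := fun v =>
  mes d (v.1 0) * mes d (v.1 1) * (mes d (v.2 0) * mes d (v.2 1))

lemma gs_eq : globalState d = Matrix.of fun v w => gv d v * (starRingEnd ℂ) (gv d w) := by
  ext v w
  simp only [globalState, Matrix.of_apply, Fin.prod_univ_two, mesProj, gv, _root_.map_mul]
  ring

/-! ### step 1: `bigM *ᵥ gv` -/

def h1f (a b : Fin d) : E8 d → ℂ := fun v =>
  cc d ^ 4 *
    (phi d a b ((v.1 0).2, (v.2 0).1) * (starRingEnd ℂ) (phi d a b ((v.1 0).1, (v.2 0).2))) *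
    ((if (v.1 1).2 = (v.1 1).1 then 1 else 0) * (if (v.2 1).1 = (v.2 1).2 then 1 else 0))

lemma vec1 (a b : Fin d) : bigM d (MA d a b) *ᵥ gv d = h1f d a b := by
  funext v
  rw [Matrix.mulVec, dotProduct]
  rw [Fintype.sum_eq_single
    ((fun x => ((v.1 x).1, (v.1 x).1), fun x => ((v.2 x).2, (v.2 x).2)) : E8 d)]
  · simp only [bigM, MA, Matrix.of_apply, gv, mes_diag, h1f]
    simp only [forall_const, and_self, if_true, mes]
    ring
  · intro u hu
    by_cases hA : (∀ x, (v.1 x).1 = (u.1 x).1) ∧ (∀ x, (v.2 x).2 = (u.2 x).2)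
    · by_cases hB0 : (u.1 0).1 = (u.1 0).2
      · by_cases hB1 : (u.1 1).1 = (u.1 1).2
        · by_cases hC0 : (u.2 0).1 = (u.2 0).2
          · by_cases hC1 : (u.2 1).1 = (u.2 1).2
            · exfalso
              apply hu
              refine e8_ext (fun x => ?_) (fun x => ?_)
              · refine Prod.ext (hA.1 x).symm ?_
                fin_cases x
                · exact (hB0.symm.trans (hA.1 0).symm)
                · exact (hB1.symm.trans (hA.1 1).symm)
              · refine Prod.ext ?_ (hA.2 x).symm
                fin_cases x
                · exact (hC0.trans (hA.2 0).symm)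
                · exact (hC1.trans (hA.2 1).symm)
            · simp [gv, mes, hC1]
          · simp [gv, mes, hC0]
        · simp [gv, mes, hB1]
      · simp [gv, mes, hB0]
    · simp only [bigM, Matrix.of_apply]
      rw [if_neg hA]
      simp

end NSQ

namespace NSQ
variable (d : ℕ)

/-! ### step 2: applying `bigU (UB a b)` -/

def g2f (a b : Fin d) : E8 d → ℂ := fun v =>
  ζ d ^ ((b : ℕ) * (((v.2 0).2 : Fin d) : ℕ)) *
  (cc d ^ 4 *
    (phi d a b ((v.1 0).2, (v.2 0).1) *
      (starRingEnd ℂ) (phi d a b ((v.1 0).1, (v.2 0).2 + a))) *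
    ((if (v.1 1).2 = (v.1 1).1 then 1 else 0) * (if (v.2 1).1 = (v.2 1).2 then 1 else 0)))

lemma vec2 (a b : Fin d) : bigU d (UB d a b) *ᵥ h1f d a b = g2f d a b := by
  funext v
  rw [Matrix.mulVec, dotProduct]
  rw [Fintype.sum_eq_single
    ((v.1, fun x => ((v.2 x).1, if x = 0 then (v.2 x).2 + a else (v.2 x).2)) : E8 d)]
  · have h10 : ((1 : Fin 2) = 0) = False := by decide
    simp only [bigU, UB, Matrix.of_apply, h1f, g2f, h10, if_true, if_false, add_zero,
      forall_const, and_self, one_mul, mul_one]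
  · intro u hu
    by_cases hA : (∀ x, v.1 x = u.1 x) ∧ (∀ x, (v.2 x).1 = (u.2 x).1)
    · by_cases hB0 : (u.2 0).2 = (v.2 0).2 + a
      · by_cases hB1 : (u.2 1).2 = (v.2 1).2
        · exfalso
          apply hu
          refine e8_ext (fun x => (hA.1 x).symm) (fun x => ?_)
          refine Prod.ext (hA.2 x).symm ?_
          fin_cases x
          · simpa using hB0
          · simpa using hB1
        · have : ¬((fun x => (u.2 x).2) 1 = (fun x => (v.2 x).2) 1) := by simpa using hB1
          simp only [bigU, UB, Matrix.of_apply]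
          rw [if_neg this]
          simp
      · have : ¬((fun x => (u.2 x).2) 0 = (fun x => (v.2 x).2) 0 + a) := by simpa using hB0
        simp only [bigU, UB, Matrix.of_apply]
        rw [if_neg this]
        simp
    · simp only [bigU, Matrix.of_apply]
      rw [if_neg hA]
      simp

/-! ### the left vector `bigU (UB a b) *ᵥ gv` -/

def u2f (a b : Fin d) : E8 d → ℂ := fun v =>
  ζ d ^ ((b : ℕ) * (((v.2 0).2 : Fin d) : ℕ)) *
  (mes d (v.1 0) * mes d (v.1 1) * (mes d ((v.2 0).1, (v.2 0).2 + a) * mes d (v.2 1)))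

lemma vec4 (a b : Fin d) : bigU d (UB d a b) *ᵥ gv d = u2f d a b := by
  funext v
  rw [Matrix.mulVec, dotProduct]
  rw [Fintype.sum_eq_single
    ((v.1, fun x => ((v.2 x).1, if x = 0 then (v.2 x).2 + a else (v.2 x).2)) : E8 d)]
  · have h10 : ((1 : Fin 2) = 0) = False := by decide
    simp only [bigU, UB, Matrix.of_apply, gv, u2f, h10, if_true, if_false, add_zero,
      forall_const, and_self, one_mul, mul_one]
  · intro u hu
    by_cases hA : (∀ x, v.1 x = u.1 x) ∧ (∀ x, (v.2 x).1 = (u.2 x).1)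
    · by_cases hB0 : (u.2 0).2 = (v.2 0).2 + a
      · by_cases hB1 : (u.2 1).2 = (v.2 1).2
        · exfalso
          apply hu
          refine e8_ext (fun x => (hA.1 x).symm) (fun x => ?_)
          refine Prod.ext (hA.2 x).symm ?_
          fin_cases x
          · simpa using hB0
          · simpa using hB1
        · have : ¬((fun x => (u.2 x).2) 1 = (fun x => (v.2 x).2) 1) := by simpa using hB1
          simp only [bigU, UB, Matrix.of_apply]
          rw [if_neg this]
          simp
      · have : ¬((fun x => (u.2 x).2) 0 = (fun x => (v.2 x).2) 0 + a) := by simpa using hB0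
        simp only [bigU, UB, Matrix.of_apply]
        rw [if_neg this]
        simp
    · simp only [bigU, Matrix.of_apply]
      rw [if_neg hA]
      simp

end NSQ

namespace NSQ
variable (d : ℕ)

/-! ### step 3: applying `bigPsi 0` -/

def g3f (a b : Fin d) : E8 d → ℂ := fun v =>
  (d : ℂ) * cc d ^ 6 * mes d ((v.1 0).1, (v.2 0).2) * phi d a b ((v.1 0).2, (v.2 0).1) *
    ((if (v.1 1).2 = (v.1 1).1 then 1 else 0) * (if (v.2 1).1 = (v.2 1).2 then 1 else 0))

lemma vec3 (a b : Fin d) : bigPsi d 0 *ᵥ g2f d a b = g3f d a b := by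
  funext v
  rw [Matrix.mulVec, dotProduct]
  rw [sum_eq_sum_comp
    (fun t : Fin d => ((fun x => (if x = 0 then t else (v.1 x).1, (v.1 x).2),
        fun x => ((v.2 x).1, if x = 0 then t else (v.2 x).2)) : E8 d))
    (fun t t' h => by simpa using congrArg (fun z : E8 d => (z.1 0).1) h)]
  · have hterm : ∀ t : Fin d,
        bigPsi d 0 v ((fun x => (if x = 0 then t else (v.1 x).1, (v.1 x).2),
          fun x => ((v.2 x).1, if x = 0 then t else (v.2 x).2)) : E8 d) *
        g2f d a b ((fun x => (if x = 0 then t else (v.1 x).1, (v.1 x).2),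
          fun x => ((v.2 x).1, if x = 0 then t else (v.2 x).2)) : E8 d) =
        cc d ^ 6 * mes d ((v.1 0).1, (v.2 0).2) * phi d a b ((v.1 0).2, (v.2 0).1) *
          ((if (v.1 1).2 = (v.1 1).1 then 1 else 0) * (if (v.2 1).1 = (v.2 1).2 then 1 else 0)) := by
      intro t
      have hcond : (∀ y : Fin 2, (v.1 y).2 = (v.1 y).2) ∧
          (∀ y : Fin 2, (v.2 y).1 = (v.2 y).1) ∧
          (∀ y : Fin 2, y ≠ 0 → (v.1 y).1 = if y = 0 then t else (v.1 y).1) ∧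
          (∀ y : Fin 2, y ≠ 0 → (v.2 y).2 = if y = 0 then t else (v.2 y).2) :=
        ⟨fun y => rfl, fun y => rfl, fun y hy => by simp [hy], fun y hy => by simp [hy]⟩
      have h10 : ((1:Fin 2) = 0) = False := by simp
      have h00 : ((0:Fin 2) = 0) = True := by simp
      simp only [bigPsi, g2f, Matrix.of_apply, h10, h00, if_true, if_false, Fin.forall_fin_two,
        ne_eq, not_false_iff, not_true, false_implies, true_implies, forall_const, and_self,
        IsEmpty.forall_iff, imp_self, and_true, true_and]
      simp only [mesProj, Matrix.of_apply, mes_diag, conj_cc, phi, if_pos rfl, _root_.map_mul,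
        conj_cc]
      simp only [if_true, _root_.map_mul, conj_cc]
      linear_combination (mes d ((v.1 0).1, (v.2 0).2) * cc d ^ 6 *
        (if (v.2 0).1 = (v.1 0).2 + a then cc d * ζ d ^ ((b:ℕ) * (((v.1 0).2 : Fin d):ℕ)) else 0) *
        ((if (v.1 1).2 = (v.1 1).1 then (1:ℂ) else 0) *
          (if (v.2 1).1 = (v.2 1).2 then 1 else 0))) * ζ_mul_conj d ((b:ℕ) * (t:ℕ))
    rw [Finset.sum_congr rfl fun t _ => hterm t, Finset.sum_const, Finset.card_univ,
      Fintype.card_fin, nsmul_eq_mul, g3f]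
    ring
  · intro w hw
    by_cases hP : (∀ y, (v.1 y).2 = (w.1 y).2) ∧ (∀ y, (v.2 y).1 = (w.2 y).1) ∧
        (∀ y, y ≠ 0 → (v.1 y).1 = (w.1 y).1) ∧ (∀ y, y ≠ 0 → (v.2 y).2 = (w.2 y).2)
    · by_cases hm : (w.1 0).1 = (w.2 0).2
      · exfalso
        apply hw ((w.1 0).1)
        refine e8_ext (fun x => ?_) (fun x => ?_)
        · fin_cases x
          · exact Prod.ext (by simp) (by simpa using (hP.1 0).symm)
          · exact Prod.ext (by simpa using (hP.2.2.1 1 (by decide)).symm)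
              (by simpa using (hP.1 1).symm)
        · fin_cases x
          · exact Prod.ext (by simpa using (hP.2.1 0).symm) (by simp [← hm])
          · exact Prod.ext (by simpa using (hP.2.1 1).symm)
              (by simpa using (hP.2.2.2 1 (by decide)).symm)
      · simp [bigPsi, mesProj, mes, hm]
    · simp only [bigPsi, Matrix.of_apply]
      rw [if_neg hP]
      simp

end NSQ

namespace NSQ
variable (d : ℕ)

lemma cc_mul_cc (hd : d ≠ 0) : cc d * cc d = (d:ℂ)⁻¹ := by
  have hdC : (d:ℂ) ≠ 0 := Nat.cast_ne_zero.mpr hd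
  field_simp
  have := cc_sq d hd
  linear_combination this

lemma final1 (hd : d ≠ 0) (a b : Fin d) :
    ∑ v : E8 d, g3f d a b v * (starRingEnd ℂ) (u2f d a b v) = ((d:ℂ)^2)⁻¹ := by
  rw [sum_eq_sum_comp
    (fun p : Fin d × Fin d × Fin d => ((fun x => if x = 0 then (p.1, p.1) else (p.2.1, p.2.1),
        fun x => if x = 0 then (p.1 + a, p.1) else (p.2.2, p.2.2)) : E8 d))
    (fun p q h => by
      have h1 := congrArg (fun z : E8 d => (z.1 0).1) h
      have h2 := congrArg (fun z : E8 d => (z.1 1).1) h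
      have h3 := congrArg (fun z : E8 d => (z.2 1).1) h
      simp only [if_pos rfl, if_neg (by decide : ¬((1:Fin 2) = 0))] at h1 h2 h3
      exact Prod.ext h1 (Prod.ext h2 h3))]
  · have hterm : ∀ p : Fin d × Fin d × Fin d,
        g3f d a b ((fun x => if x = 0 then (p.1, p.1) else (p.2.1, p.2.1),
          fun x => if x = 0 then (p.1 + a, p.1) else (p.2.2, p.2.2)) : E8 d) *
        (starRingEnd ℂ) (u2f d a b ((fun x => if x = 0 then (p.1, p.1) else (p.2.1, p.2.1),
          fun x => if x = 0 then (p.1 + a, p.1) else (p.2.2, p.2.2)) : E8 d)) =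
        (d : ℂ) * cc d ^ 12 := by
      intro p
      have h10 : ((1:Fin 2) = 0) = False := by simp
      have h00 : ((0:Fin 2) = 0) = True := by simp
      simp only [g3f, u2f, h10, h00, if_true, if_false, mes_diag, phi, if_pos rfl,
        _root_.map_mul, conj_cc, mul_one]
      linear_combination ((d:ℂ) * cc d ^ 12) * ζ_mul_conj d ((b:ℕ) * ((p.1 : Fin d):ℕ))
    rw [Finset.sum_congr rfl fun p _ => hterm p, Finset.sum_const, Finset.card_univ]
    simp only [Fintype.card_prod, Fintype.card_fin, nsmul_eq_mul]
    have hdC : (d:ℂ) ≠ 0 := Nat.cast_ne_zero.mpr hd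
    have h12 : cc d ^ 12 = (cc d * cc d) ^ 6 := by ring
    rw [h12, cc_mul_cc d hd]
    push_cast
    field_simp
  · intro v hv
    by_cases hU1 : (v.1 0).1 = (v.1 0).2
    · by_cases hU2 : (v.1 1).1 = (v.1 1).2
      · by_cases hU3 : (v.2 0).1 = (v.2 0).2 + a
        · by_cases hU4 : (v.2 1).1 = (v.2 1).2
          · by_cases hG1 : (v.1 0).1 = (v.2 0).2
            · exfalso
              apply hv ((v.1 0).1, (v.1 1).1, (v.2 1).1)
              refine e8_ext (fun x => ?_) (fun x => ?_) <;> fin_cases x <;>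
                simp only [Fin.zero_eta, Fin.mk_one, if_pos rfl, if_true, eq_self_iff_true,
                  if_neg (by decide : ¬((1:Fin 2) = 0))]
              · exact Prod.ext rfl hU1.symm
              · exact Prod.ext rfl hU2.symm
              · exact Prod.ext (by rw [hU3, ← hG1]) hG1.symm
              · exact Prod.ext rfl hU4.symm
            · simp [g3f, mes, hG1]
          · simp [u2f, mes, hU4]
        · simp [u2f, mes, hU3]
      · simp [u2f, mes, hU2]
    · simp [u2f, mes, hU1]

lemma tr1 (hd : d ≠ 0) (a b : Fin d) :
    Matrix.trace (bigPsi d 0 * bigU d (UB d a b) * bigM d (MA d a b) * globalState d *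
      (bigU d (UB d a b))ᴴ) = ((d:ℂ)^2)⁻¹ := by
  rw [gs_eq, trace_outer]
  simp only [Matrix.conjTranspose_conjTranspose]
  rw [← Matrix.mulVec_mulVec, ← Matrix.mulVec_mulVec, vec1, vec2, vec3, vec4]
  exact final1 d hd a b

end NSQ

namespace NSQ
variable (d : ℕ)

lemma bigU_conjT (V : Matrix (Fin 2 → Fin d) (Fin 2 → Fin d) ℂ) :
    bigU d Vᴴ = (bigU d V)ᴴ := by
  ext v w
  simp only [bigU, Matrix.of_apply, Matrix.conjTranspose_apply, star_mul', star_one, star_zero,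
    apply_ite (star : ℂ → ℂ), Complex.star_def, Complex.conj_conj]
  have hsymm : ((∀ x, v.1 x = w.1 x) ∧ (∀ x, (v.2 x).1 = (w.2 x).1)) =
      ((∀ x, w.1 x = v.1 x) ∧ (∀ x, (w.2 x).1 = (v.2 x).1)) := by
    apply propext
    constructor <;> rintro ⟨h1, h2⟩ <;> exact ⟨fun x => (h1 x).symm, fun x => (h2 x).symm⟩
  simp only [hsymm]

lemma bigU_one : bigU d 1 = (1 : Matrix (E8 d) (E8 d) ℂ) := by
  ext v w
  simp only [bigU, Matrix.of_apply]
  by_cases hA : (∀ x, v.1 x = w.1 x) ∧ (∀ x, (v.2 x).1 = (w.2 x).1)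
  · by_cases hB : (fun x => (v.2 x).2) = (fun x => (w.2 x).2)
    · have hvw : v = w :=
        e8_ext hA.1 (fun x => Prod.ext (hA.2 x) (congrFun hB x))
      simp [hA, hB, hvw, Matrix.one_apply]
    · have hvw : v ≠ w := by
        intro h; exact hB (by rw [h])
      simp [hA, Matrix.one_apply_ne hB, Matrix.one_apply_ne hvw]
  · have hvw : v ≠ w := by
      intro h
      exact hA (by subst h; exact ⟨fun x => rfl, fun x => rfl⟩)
    rw [if_neg hA]
    simp [Matrix.one_apply_ne hvw]

/-! ### step 3': applying `bigPsi 1` -/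

def g4f (a b : Fin d) : E8 d → ℂ := fun v =>
  cc d ^ 5 * mes d ((v.1 1).1, (v.2 1).2) *
    (phi d a b ((v.1 0).2, (v.2 0).1) * (starRingEnd ℂ) (phi d a b ((v.1 0).1, (v.2 0).2))) *
    (if (v.2 1).1 = (v.1 1).2 then 1 else 0)

lemma vec5 (a b : Fin d) : bigPsi d 1 *ᵥ h1f d a b = g4f d a b := by
  funext v
  rw [Matrix.mulVec, dotProduct]
  rw [Fintype.sum_eq_single
    ((fun x => (if x = 1 then (v.1 1).2 else (v.1 x).1, (v.1 x).2),
      fun x => ((v.2 x).1, if x = 1 then (v.1 1).2 else (v.2 x).2)) : E8 d)]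
  · have h01 : ((0:Fin 2) = 1) = False := by simp [Fin.ext_iff]
    have h11 : ((1:Fin 2) = 1) = True := by simp
    simp only [bigPsi, h1f, g4f, Matrix.of_apply, h01, h11, if_true, if_false,
      Fin.forall_fin_two, ne_eq, not_false_iff, not_true, false_implies, true_implies,
      forall_const, and_self, IsEmpty.forall_iff, imp_self, and_true, true_and,
      mesProj, mes_diag, _root_.map_mul, conj_cc, mul_one]
    ring
  · intro w hw
    by_cases hP : (∀ y, (v.1 y).2 = (w.1 y).2) ∧ (∀ y, (v.2 y).1 = (w.2 y).1) ∧
        (∀ y, y ≠ 1 → (v.1 y).1 = (w.1 y).1) ∧ (∀ y, y ≠ 1 → (v.2 y).2 = (w.2 y).2)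
    · by_cases hm : (w.1 1).1 = (w.2 1).2
      · by_cases hq : (w.1 1).2 = (w.1 1).1
        · exfalso
          apply hw
          have hq1 : (w.1 1).1 = (v.1 1).2 := by rw [← hq, ← hP.1 1]
          refine e8_ext (fun x => ?_) (fun x => ?_) <;> fin_cases x <;>
            simp only [Fin.zero_eta, Fin.mk_one, if_pos rfl, if_true,
              if_neg (by decide : ¬((0:Fin 2) = 1))]
          · exact Prod.ext (hP.2.2.1 0 (by decide)).symm (hP.1 0).symm
          · exact Prod.ext hq1 (hP.1 1).symm
          · exact Prod.ext (hP.2.1 0).symm (hP.2.2.2 0 (by decide)).symm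
          · exact Prod.ext (hP.2.1 1).symm (by rw [← hm, hq1])
        · simp [h1f, hq]
      · simp [bigPsi, mesProj, mes, hm]
    · simp only [bigPsi, Matrix.of_apply]
      rw [if_neg hP]
      simp

lemma final2 (hd : d ≠ 0) (a b : Fin d) :
    ∑ v : E8 d, g4f d a b v * (starRingEnd ℂ) (gv d v) = ((d:ℂ)^4)⁻¹ := by
  rw [sum_eq_sum_comp
    (fun p : Fin d × Fin d => ((fun x => if x = 0 then (p.1, p.1) else (p.2, p.2),
        fun x => if x = 0 then (p.1 + a, p.1 + a) else (p.2, p.2)) : E8 d))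
    (fun p q h => by
      have h1 := congrArg (fun z : E8 d => (z.1 0).1) h
      have h2 := congrArg (fun z : E8 d => (z.1 1).1) h
      simp only [if_pos rfl, if_neg (by decide : ¬((1:Fin 2) = 0))] at h1 h2
      exact Prod.ext h1 h2)]
  · have hterm : ∀ p : Fin d × Fin d,
        g4f d a b ((fun x => if x = 0 then (p.1, p.1) else (p.2, p.2),
          fun x => if x = 0 then (p.1 + a, p.1 + a) else (p.2, p.2)) : E8 d) *
        (starRingEnd ℂ) (gv d ((fun x => if x = 0 then (p.1, p.1) else (p.2, p.2),
          fun x => if x = 0 then (p.1 + a, p.1 + a) else (p.2, p.2)) : E8 d)) =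
        cc d ^ 12 := by
      intro p
      have h10 : ((1:Fin 2) = 0) = False := by simp
      have h00 : ((0:Fin 2) = 0) = True := by simp
      simp only [g4f, gv, h10, h00, if_true, if_false, mes_diag, phi, if_pos rfl,
        _root_.map_mul, conj_cc, mul_one]
      linear_combination (cc d ^ 12) * ζ_mul_conj d ((b:ℕ) * ((p.1 : Fin d):ℕ))
    rw [Finset.sum_congr rfl fun p _ => hterm p, Finset.sum_const, Finset.card_univ]
    simp only [Fintype.card_prod, Fintype.card_fin, nsmul_eq_mul]
    have hdC : (d:ℂ) ≠ 0 := Nat.cast_ne_zero.mpr hd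
    have h12 : cc d ^ 12 = (cc d * cc d) ^ 6 := by ring
    rw [h12, cc_mul_cc d hd]
    push_cast
    field_simp
  · intro v hv
    by_cases hU1 : (v.1 0).1 = (v.1 0).2
    · by_cases hU3 : (v.2 0).1 = (v.2 0).2
      · by_cases hU4 : (v.2 1).1 = (v.2 1).2
        · by_cases hG1 : (v.1 1).1 = (v.2 1).2
          · by_cases hG3 : (v.2 1).1 = (v.1 1).2
            · by_cases hG4 : (v.2 0).2 = (v.1 0).1 + a
              · exfalso
                apply hv ((v.1 0).1, (v.1 1).1)
                have hm : (v.1 1).2 = (v.1 1).1 := by rw [← hG3, hU4, ← hG1]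
                refine e8_ext (fun x => ?_) (fun x => ?_) <;> fin_cases x <;>
                  simp only [Fin.zero_eta, Fin.mk_one, if_pos rfl, if_true,
                    if_neg (by decide : ¬((1:Fin 2) = 0))]
                · exact Prod.ext rfl hU1.symm
                · exact Prod.ext rfl hm
                · exact Prod.ext (by rw [hU3, hG4]) hG4
                · exact Prod.ext (by rw [hG3, hm]) (by rw [← hG1])
              · simp [g4f, phi, hG4]
            · simp [g4f, hG3]
          · simp [g4f, mes, hG1]
        · simp [gv, mes, hU4]
      · simp [gv, mes, hU3]
    · simp [gv, mes, hU1]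

lemma tr2 (hd : d ≠ 0) (a b : Fin d) :
    Matrix.trace (bigPsi d 1 * bigU d 1 * bigM d (MA d a b) * globalState d *
      bigU d 1) = ((d:ℂ)^4)⁻¹ := by
  rw [bigU_one, gs_eq, trace_outer]
  simp only [Matrix.conjTranspose_one, Matrix.one_mulVec, Matrix.mul_one]
  rw [← Matrix.mulVec_mulVec, vec1, vec5]
  exact final2 d hd a b

end NSQ

open NSQ in
/-- NS-QRAC with two shared maximally entangled states and `2 log d` bits (i.e. `d²`
classical messages): there is a quantum strategy with `F₁ = 1` and `F₂ = 1/d²`, hence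
average success probability `(1/2)(1 + 1/d²)`. -/
theorem nsqrac_lower_bound (d : ℕ) (hd : 2 ≤ d) :
    ∃ (M : Fin (d ^ 2) →
        Matrix ((Fin 2 → Fin d) × (Fin 2 → Fin d)) ((Fin 2 → Fin d) × (Fin 2 → Fin d)) ℂ)
      (U : Fin (d ^ 2) → Fin 2 → Matrix (Fin 2 → Fin d) (Fin 2 → Fin d) ℂ),
      (∀ i, (M i).PosSemidef) ∧ (∑ i, M i = 1) ∧
      (∀ i x, U i x ∈ Matrix.unitaryGroup (Fin 2 → Fin d) ℂ) ∧
      fid d (d ^ 2) M U 0 = 1 ∧ fid d (d ^ 2) M U 1 = 1 / (d : ℝ) ^ 2 ∧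
      (fid d (d ^ 2) M U 0 + fid d (d ^ 2) M U 1) / 2 = (1 / 2) * (1 + 1 / (d : ℝ) ^ 2) := by
  have hd0 : d ≠ 0 := by omega
  have hdR : (d : ℝ) ≠ 0 := Nat.cast_ne_zero.mpr hd0
  let e : Fin (d ^ 2) ≃ Fin d × Fin d :=
    (finCongr (by ring : d ^ 2 = d * d)).trans finProdFinEquiv.symm
  have h0 : fid d (d ^ 2) (fun i => NSQ.MA d (e i).1 (e i).2)
      (fun i x => if x = 0 then NSQ.UB d (e i).1 (e i).2 else 1) 0 = 1 := by
    have key : ∀ i : Fin (d ^ 2), Matrix.trace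
        (bigPsi d 0 * bigU d (if (0:Fin 2) = 0 then NSQ.UB d (e i).1 (e i).2 else 1) *
          bigM d (NSQ.MA d (e i).1 (e i).2) * globalState d *
          bigU d ((if (0:Fin 2) = 0 then NSQ.UB d (e i).1 (e i).2 else 1))ᴴ) = ((d:ℂ)^2)⁻¹ := by
      intro i
      simp only [if_pos rfl]
      rw [NSQ.bigU_conjT]
      exact NSQ.tr1 d hd0 _ _
    rw [fid, Finset.sum_congr rfl fun i _ => key i, Finset.sum_const, Finset.card_univ,
      Fintype.card_fin, nsmul_eq_mul]
    have : ((d ^ 2 : ℕ) : ℂ) * ((d:ℂ)^2)⁻¹ = 1 := by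
      have hdC : (d:ℂ) ≠ 0 := Nat.cast_ne_zero.mpr hd0
      push_cast
      field_simp
    rw [this]
    simp
  have h1 : fid d (d ^ 2) (fun i => NSQ.MA d (e i).1 (e i).2)
      (fun i x => if x = 0 then NSQ.UB d (e i).1 (e i).2 else 1) 1 = 1 / (d:ℝ)^2 := by
    have key : ∀ i : Fin (d ^ 2), Matrix.trace
        (bigPsi d 1 * bigU d (if (1:Fin 2) = 0 then NSQ.UB d (e i).1 (e i).2 else 1) *
          bigM d (NSQ.MA d (e i).1 (e i).2) * globalState d *
          bigU d ((if (1:Fin 2) = 0 then NSQ.UB d (e i).1 (e i).2 else 1))ᴴ) = ((d:ℂ)^4)⁻¹ := by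
      intro i
      simp only [if_neg (by decide : ¬((1:Fin 2) = 0)), Matrix.conjTranspose_one]
      exact NSQ.tr2 d hd0 _ _
    rw [fid, Finset.sum_congr rfl fun i _ => key i, Finset.sum_const, Finset.card_univ,
      Fintype.card_fin, nsmul_eq_mul]
    have : ((d ^ 2 : ℕ) : ℂ) * ((d:ℂ)^4)⁻¹ = (((1 / (d:ℝ)^2 : ℝ)) : ℂ) := by
      have hdC : (d:ℂ) ≠ 0 := Nat.cast_ne_zero.mpr hd0
      push_cast
      field_simp
    rw [this, Complex.ofReal_re]
  refine ⟨fun i => NSQ.MA d (e i).1 (e i).2,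
    fun i x => if x = 0 then NSQ.UB d (e i).1 (e i).2 else 1, fun i => NSQ.MA_psd d _ _,
    ?_, ?_, h0, h1, by rw [h0, h1]; ring⟩
  · rw [Equiv.sum_comp e (fun p => NSQ.MA d p.1 p.2), Fintype.sum_prod_type]
    exact NSQ.MA_sum d hd0
  · intro i x
    fin_cases x
    · simpa using NSQ.UB_unitary d hd0 (e i).1 (e i).2
    · simp only [Fin.mk_one, if_neg (by decide : ¬((1:Fin 2) = 0))]
      exact one_mem _
end
end

section
/- Fix an integer d ≥ 2. For every density matrix ρ on ℂ^d ⊗ ℂ^d ⊗ ℂ^d with tensor factors labelled A, B, C, the singlet fractions of the two reduced states satisfy the strict monogamy inequality F(tr_C ρ) + F(tr_B ρ) < 2; equivalently, it is impossible that both the reduced state on A ⊗ B and the reduced state on A ⊗ C are maximally entangled. -/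
open Matrix BigOperators ComplexOrder

noncomputable section

/-- Index type for the three systems A, B, C, each of dimension `d`. -/
abbrev I3 (d : ℕ) := Fin d × Fin d × Fin d

/-- Partial trace over the third factor C. -/
def trC (d : ℕ) (ρ : Matrix (I3 d) (I3 d) ℂ) :
    Matrix (Fin d × Fin d) (Fin d × Fin d) ℂ :=
  Matrix.of fun p q => ∑ c : Fin d, ρ (p.1, p.2, c) (q.1, q.2, c)

/-- Partial trace over the second factor B. -/
def trB (d : ℕ) (ρ : Matrix (I3 d) (I3 d) ℂ) :
    Matrix (Fin d × Fin d) (Fin d × Fin d) ℂ :=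
  Matrix.of fun p q => ∑ b : Fin d, ρ (p.1, b, p.2) (q.1, b, q.2)

/-- Partial trace over the first two factors A, B. -/
def trAB (d : ℕ) (ρ : Matrix (I3 d) (I3 d) ℂ) : Matrix (Fin d) (Fin d) ℂ :=
  Matrix.of fun c c' => ∑ a : Fin d, ∑ b : Fin d, ρ (a, b, c) (a, b, c')

/-- The singlet fraction `F(σ) = ⟨ψ⁺|σ|ψ⁺⟩` of a bipartite state. -/
def singletFraction (d : ℕ) (σ : Matrix (Fin d × Fin d) (Fin d × Fin d) ℂ) : ℂ :=
  star (mes d) ⬝ᵥ σ.mulVec (mes d)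

namespace SFM
open scoped InnerProductSpace

def U (d : ℕ) (c : Fin d) : EuclideanSpace ℂ (I3 d) :=
  WithLp.toLp 2 (fun p : I3 d => mes d (p.1, p.2.1) * (if p.2.2 = c then 1 else 0))

def V (d : ℕ) (c : Fin d) : EuclideanSpace ℂ (I3 d) :=
  WithLp.toLp 2 (fun p : I3 d => mes d (p.1, p.2.2) * (if p.2.1 = c then 1 else 0))

lemma mes_mul (d : ℕ) (hd : 0 < d) (p q : Fin d × Fin d) :
    (starRingEnd ℂ) (mes d p) * mes d q =
      if p.1 = p.2 ∧ q.1 = q.2 then ((d : ℂ))⁻¹ else 0 := by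
  simp only [mes, apply_ite, map_zero, Complex.conj_ofReal, ite_mul, zero_mul, mul_ite, mul_zero]
  by_cases h1 : p.1 = p.2 <;> by_cases h2 : q.1 = q.2 <;> simp [h1, h2]
  rw [← mul_inv]
  congr 1
  rw [← Complex.ofReal_mul, Real.mul_self_sqrt (by positivity)]
  norm_num

lemma conj_U_mul_U (d : ℕ) (hd : 0 < d) (c c' : Fin d) (p : I3 d) :
    (starRingEnd ℂ) (U d c p) * (U d c' p) =
      if p.1 = p.2.1 ∧ p.2.2 = c ∧ p.2.2 = c' then ((d : ℂ))⁻¹ else 0 := by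
  simp only [U, PiLp.toLp_apply, _root_.map_mul]
  rw [show (starRingEnd ℂ) (if p.2.2 = c then (1:ℂ) else 0) = (if p.2.2 = c then (1:ℂ) else 0) by
    split <;> simp]
  rw [mul_mul_mul_comm, mes_mul d hd]
  simp only [mul_ite, mul_one, mul_zero, ite_mul, zero_mul, one_mul]
  by_cases h1 : p.1 = p.2.1 <;> by_cases h2 : p.2.2 = c <;> by_cases h3 : p.2.2 = c' <;>
    simp [h1, h2, h3]

lemma conj_V_mul_V (d : ℕ) (hd : 0 < d) (c c' : Fin d) (p : I3 d) :
    (starRingEnd ℂ) (V d c p) * (V d c' p) =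
      if p.1 = p.2.2 ∧ p.2.1 = c ∧ p.2.1 = c' then ((d : ℂ))⁻¹ else 0 := by
  simp only [V, PiLp.toLp_apply, _root_.map_mul]
  rw [show (starRingEnd ℂ) (if p.2.1 = c then (1:ℂ) else 0) = (if p.2.1 = c then (1:ℂ) else 0) by
    split <;> simp]
  rw [mul_mul_mul_comm, mes_mul d hd]
  simp only [mul_ite, mul_one, mul_zero, ite_mul, zero_mul, one_mul]
  by_cases h1 : p.1 = p.2.2 <;> by_cases h2 : p.2.1 = c <;> by_cases h3 : p.2.1 = c' <;>
    simp [h1, h2, h3]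

lemma conj_U_mul_V (d : ℕ) (hd : 0 < d) (c c' : Fin d) (p : I3 d) :
    (starRingEnd ℂ) (U d c p) * (V d c' p) =
      if (p.1 = p.2.1 ∧ p.1 = p.2.2) ∧ p.2.2 = c ∧ p.2.1 = c' then ((d : ℂ))⁻¹ else 0 := by
  simp only [U, V, PiLp.toLp_apply, _root_.map_mul]
  rw [show (starRingEnd ℂ) (if p.2.2 = c then (1:ℂ) else 0) = (if p.2.2 = c then (1:ℂ) else 0) by
    split <;> simp]
  rw [mul_mul_mul_comm, mes_mul d hd]
  simp only [mul_ite, mul_one, mul_zero, ite_mul, zero_mul, one_mul]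
  by_cases h1 : p.1 = p.2.1 <;> by_cases h1' : p.1 = p.2.2 <;> by_cases h2 : p.2.2 = c <;>
    by_cases h3 : p.2.1 = c' <;> simp [h1, h1', h2, h3]

lemma inner_U_U (d : ℕ) (hd : 0 < d) (c c' : Fin d) :
    ⟪U d c, U d c'⟫_ℂ = if c = c' then 1 else 0 := by
  simp only [PiLp.inner_apply, RCLike.inner_apply', conj_U_mul_U d hd]
  by_cases h : c = c'
  · subst h
    simp only [and_self, eq_self_iff_true, Fintype.sum_prod_type, ite_and]
    simp [Finset.sum_ite_eq, Finset.sum_ite_eq', hd.ne',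
      mul_inv_cancel₀ (show (d:ℂ) ≠ 0 by exact_mod_cast hd.ne')]
  · have : ∀ p : I3 d, (if p.1 = p.2.1 ∧ p.2.2 = c ∧ p.2.2 = c' then ((d : ℂ))⁻¹ else 0) = 0 := by
      intro p
      simp only [ite_eq_right_iff]
      rintro ⟨-, rfl, rfl⟩
      exact absurd rfl h
    simp [this, h]

lemma inner_V_V (d : ℕ) (hd : 0 < d) (c c' : Fin d) :
    ⟪V d c, V d c'⟫_ℂ = if c = c' then 1 else 0 := by
  simp only [PiLp.inner_apply, RCLike.inner_apply', conj_V_mul_V d hd]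
  by_cases h : c = c'
  · subst h
    simp only [and_self, eq_self_iff_true, Fintype.sum_prod_type, ite_and]
    simp [Finset.sum_ite_eq, Finset.sum_ite_eq', hd.ne',
      mul_inv_cancel₀ (show (d:ℂ) ≠ 0 by exact_mod_cast hd.ne')]
  · have : ∀ p : I3 d, (if p.1 = p.2.2 ∧ p.2.1 = c ∧ p.2.1 = c' then ((d : ℂ))⁻¹ else 0) = 0 := by
      intro p
      simp only [ite_eq_right_iff]
      rintro ⟨-, rfl, rfl⟩
      exact absurd rfl h
    simp [this, h]

lemma inner_U_V (d : ℕ) (hd : 0 < d) (c c' : Fin d) :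
    ⟪U d c, V d c'⟫_ℂ = if c = c' then ((d : ℂ))⁻¹ else 0 := by
  simp only [PiLp.inner_apply, RCLike.inner_apply', conj_U_mul_V d hd]
  by_cases h : c = c'
  · subst h
    simp [Fintype.sum_prod_type, ite_and, Finset.sum_ite_eq, Finset.sum_ite_eq']
  · have : ∀ p : I3 d,
        (if (p.1 = p.2.1 ∧ p.1 = p.2.2) ∧ p.2.2 = c ∧ p.2.1 = c' then ((d : ℂ))⁻¹ else 0) = 0 := by
      intro p
      simp only [ite_eq_right_iff]
      rintro ⟨⟨h1, h2⟩, rfl, rfl⟩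
      exact absurd (h2.symm.trans h1) h
    simp [this, h]
end SFM

namespace SFM
open scoped InnerProductSpace
lemma inner_V_U (d : ℕ) (hd : 0 < d) (c c' : Fin d) :
    ⟪V d c, U d c'⟫_ℂ = if c = c' then ((d : ℂ))⁻¹ else 0 := by
  rw [← inner_conj_symm, inner_U_V d hd]
  by_cases h : c = c' <;> simp [h, eq_comm]

def W (d : ℕ) (i : Fin d × Bool) : EuclideanSpace ℂ (I3 d) :=
  if i.2 then ((Real.sqrt ((d:ℝ) / (2*((d:ℝ)-1))) : ℝ) : ℂ) • (U d i.1 - V d i.1)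
  else ((Real.sqrt ((d:ℝ) / (2*((d:ℝ)+1))) : ℝ) : ℂ) • (U d i.1 + V d i.1)

lemma orthonormal_W (d : ℕ) (hd : 2 ≤ d) : Orthonormal ℂ (W d) := by
  have hd0 : 0 < d := by omega
  have hdR : (2:ℝ) ≤ (d:ℝ) := by exact_mod_cast hd
  have hC : ((d:ℂ)) ≠ 0 := by exact_mod_cast hd0.ne'
  have hCp : ((d:ℂ)) + 1 ≠ 0 := by
    intro h
    have : ((d:ℝ) + 1 : ℝ) = 0 := by exact_mod_cast (by push_cast at h ⊢; exact_mod_cast h : ((d:ℝ):ℂ) + 1 = 0)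
    nlinarith
  have hCm : ((d:ℂ)) - 1 ≠ 0 := by
    intro h
    have : ((d:ℝ) - 1 : ℝ) = 0 := by exact_mod_cast (by push_cast at h ⊢; exact_mod_cast h : ((d:ℝ):ℂ) - 1 = 0)
    nlinarith
  have hp : (0:ℝ) ≤ (d:ℝ) / (2*((d:ℝ)+1)) := by positivity
  have hm : (0:ℝ) ≤ (d:ℝ) / (2*((d:ℝ)-1)) := by
    apply div_nonneg (by positivity); nlinarith
  rw [orthonormal_iff_ite]
  rintro ⟨c, b⟩ ⟨c', b'⟩
  have key : ∀ (r s : ℝ) (x y : EuclideanSpace ℂ (I3 d)),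
      ⟪(r:ℂ) • x, (s:ℂ) • y⟫_ℂ = ((r*s : ℝ):ℂ) * ⟪x, y⟫_ℂ := by
    intro r s x y
    rw [inner_smul_left, inner_smul_right, Complex.conj_ofReal]
    push_cast; ring
  cases b <;> cases b' <;>
    simp only [W, Bool.false_eq_true, if_false, if_true, key, inner_add_left, inner_add_right,
      inner_sub_left, inner_sub_right, inner_U_U d hd0, inner_U_V d hd0, inner_V_U d hd0,
      inner_V_V d hd0, Prod.mk.injEq] <;>
    by_cases h : c = c' <;>
    simp only [h, if_true, if_false, true_and, false_and, and_true, and_false]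
  · rw [Real.mul_self_sqrt hp]; push_cast; field_simp; ring
  · simp
  · ring_nf
  · simp
  · norm_num
  · simp
  · rw [Real.mul_self_sqrt hm]; push_cast; field_simp; ring
  · simp

end SFM

namespace SFM
open scoped InnerProductSpace

lemma key_bound (d : ℕ) (hd : 2 ≤ d) (x : EuclideanSpace ℂ (I3 d)) :
    ∑ c : Fin d, (‖⟪U d c, x⟫_ℂ‖^2 + ‖⟪V d c, x⟫_ℂ‖^2) ≤ (1 + ((d:ℝ))⁻¹) * ‖x‖^2 := by
  have hdR : (2:ℝ) ≤ (d:ℝ) := by exact_mod_cast hd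
  have hp : (0:ℝ) ≤ (d:ℝ) / (2*((d:ℝ)+1)) := by positivity
  have hm : (0:ℝ) ≤ (d:ℝ) / (2*((d:ℝ)-1)) := by
    apply div_nonneg (by positivity); nlinarith
  have bessel := (orthonormal_W d hd).sum_inner_products_le (s := Finset.univ) x
  rw [Fintype.sum_prod_type] at bessel
  have percg : ∀ c : Fin d,
      ‖⟪U d c, x⟫_ℂ‖^2 + ‖⟪V d c, x⟫_ℂ‖^2 ≤
        (1 + ((d:ℝ))⁻¹) * (∑ b : Bool, ‖⟪W d (c, b), x⟫_ℂ‖^2) := by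
    intro c
    have h1 : ⟪W d (c, false), x⟫_ℂ =
        ((Real.sqrt ((d:ℝ)/(2*((d:ℝ)+1))) : ℝ):ℂ) * (⟪U d c, x⟫_ℂ + ⟪V d c, x⟫_ℂ) := by
      simp [W, inner_smul_left, inner_add_left, Complex.conj_ofReal, mul_add]; ring
    have h2 : ⟪W d (c, true), x⟫_ℂ =
        ((Real.sqrt ((d:ℝ)/(2*((d:ℝ)-1))) : ℝ):ℂ) * (⟪U d c, x⟫_ℂ - ⟪V d c, x⟫_ℂ) := by
      simp [W, inner_smul_left, inner_sub_left, Complex.conj_ofReal, mul_sub]; ring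
    rw [Fintype.sum_bool, h1, h2, norm_mul, norm_mul, mul_pow, mul_pow,
      Complex.norm_real, Complex.norm_real, Real.norm_eq_abs, Real.norm_eq_abs, sq_abs, sq_abs,
      Real.sq_sqrt hp, Real.sq_sqrt hm]
    set p := ⟪U d c, x⟫_ℂ
    set q := ⟪V d c, x⟫_ℂ
    have par : ‖p + q‖*‖p + q‖ + ‖p - q‖*‖p - q‖ = 2*(‖p‖*‖p‖ + ‖q‖*‖q‖) :=
      by simpa only [sq] using parallelogram_law_with_norm ℂ p q
    have e1 : (1 + ((d:ℝ))⁻¹) * ((d:ℝ)/(2*((d:ℝ)+1))) = 1/2 := by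
      field_simp
    have e2 : (1:ℝ)/2 ≤ (1 + ((d:ℝ))⁻¹) * ((d:ℝ)/(2*((d:ℝ)-1))) := by
      have h0 : (0:ℝ) < (d:ℝ) := by linarith
      have h1' : (0:ℝ) < (d:ℝ) - 1 := by linarith
      rw [← sub_nonneg]
      have : (1 + ((d:ℝ))⁻¹) * ((d:ℝ)/(2*((d:ℝ)-1))) - 1/2 = 1/((d:ℝ)-1) := by
        field_simp
        ring
      rw [this]
      positivity
    nlinarith [sq_nonneg (‖p - q‖), sq_nonneg (‖p + q‖), sq_abs (‖p+q‖), sq_nonneg ‖p‖,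
      sq_nonneg ‖q‖, pow_two_nonneg ‖p-q‖]
  calc ∑ c : Fin d, (‖⟪U d c, x⟫_ℂ‖^2 + ‖⟪V d c, x⟫_ℂ‖^2)
      ≤ ∑ c : Fin d, (1 + ((d:ℝ))⁻¹) * (∑ b : Bool, ‖⟪W d (c, b), x⟫_ℂ‖^2) :=
        Finset.sum_le_sum fun c _ => percg c
    _ = (1 + ((d:ℝ))⁻¹) * ∑ c : Fin d, ∑ b : Bool, ‖⟪W d (c, b), x⟫_ℂ‖^2 := by
        rw [Finset.mul_sum]
    _ ≤ (1 + ((d:ℝ))⁻¹) * ‖x‖^2 := by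
        apply mul_le_mul_of_nonneg_left bessel
        positivity
end SFM


namespace SFM
open scoped InnerProductSpace

lemma quad_U (d : ℕ) (ρ : Matrix (I3 d) (I3 d) ℂ) (c : Fin d) :
    star (U d c : I3 d → ℂ) ⬝ᵥ ρ.mulVec (U d c : I3 d → ℂ) =
      ∑ p : Fin d × Fin d, ∑ q : Fin d × Fin d,
        (starRingEnd ℂ) (mes d p) * (ρ (p.1, p.2, c) (q.1, q.2, c) * mes d q) := by
  simp only [dotProduct, Matrix.mulVec, Pi.star_apply, RCLike.star_def, U, PiLp.toLp_apply, _root_.map_mul,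
    apply_ite, _root_.map_one, map_zero, mul_ite, mul_one, mul_zero, ite_mul, zero_mul,
    Fintype.sum_prod_type, Finset.sum_ite_eq, Finset.sum_ite_eq', Finset.mem_univ, if_true,
    Finset.mul_sum, Finset.sum_mul]
  refine Finset.sum_congr rfl fun a _ => Finset.sum_congr rfl fun b _ => ?_
  rw [Finset.sum_comm]
  refine Finset.sum_congr rfl fun a' _ => ?_
  rw [Finset.sum_comm]
  refine Finset.sum_congr rfl fun b' _ => ?_
  simp [Finset.sum_ite_eq']

lemma quad_V (d : ℕ) (ρ : Matrix (I3 d) (I3 d) ℂ) (c : Fin d) :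
    star (V d c : I3 d → ℂ) ⬝ᵥ ρ.mulVec (V d c : I3 d → ℂ) =
      ∑ p : Fin d × Fin d, ∑ q : Fin d × Fin d,
        (starRingEnd ℂ) (mes d p) * (ρ (p.1, c, p.2) (q.1, c, q.2) * mes d q) := by
  simp only [dotProduct, Matrix.mulVec, Pi.star_apply, RCLike.star_def, V, PiLp.toLp_apply, _root_.map_mul,
    apply_ite, _root_.map_one, map_zero, mul_ite, mul_one, mul_zero, ite_mul, zero_mul,
    Fintype.sum_prod_type, Finset.sum_ite_eq, Finset.sum_ite_eq', Finset.mem_univ, if_true,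
    Finset.mul_sum, Finset.sum_mul]
  conv_lhs => enter [2,a,2,x1,2,x2,2,x3]; rw [Finset.sum_comm]
  simp only [Finset.sum_ite_eq', Finset.mem_univ, if_true]
  conv_lhs => enter [2,a]; rw [Finset.sum_comm]
  conv_lhs => enter [2,a,2,x2]; rw [Finset.sum_comm]
  conv_lhs => enter [2,a,2,x2,2,x3]; rw [Finset.sum_comm]
  simp only [Finset.sum_ite_eq', Finset.mem_univ, if_true]

lemma sf_trC (d : ℕ) (ρ : Matrix (I3 d) (I3 d) ℂ) :
    singletFraction d (trC d ρ) =
      ∑ c : Fin d, star (U d c : I3 d → ℂ) ⬝ᵥ ρ.mulVec (U d c : I3 d → ℂ) := by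
  simp only [quad_U]
  simp only [singletFraction, dotProduct, Matrix.mulVec, trC, Matrix.of_apply,
    Pi.star_apply, RCLike.star_def, Finset.mul_sum, Finset.sum_mul]
  rw [Finset.sum_comm]
  conv_lhs => enter [2, y]; rw [Finset.sum_comm]
  rw [Finset.sum_comm]
  conv_lhs => enter [2, i]; rw [Finset.sum_comm]


lemma sf_trB (d : ℕ) (ρ : Matrix (I3 d) (I3 d) ℂ) :
    singletFraction d (trB d ρ) =
      ∑ c : Fin d, star (V d c : I3 d → ℂ) ⬝ᵥ ρ.mulVec (V d c : I3 d → ℂ) := by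
  simp only [quad_V]
  simp only [singletFraction, dotProduct, Matrix.mulVec, trB, Matrix.of_apply,
    Pi.star_apply, RCLike.star_def, Finset.mul_sum, Finset.sum_mul]
  rw [Finset.sum_comm]
  conv_lhs => enter [2, y]; rw [Finset.sum_comm]
  rw [Finset.sum_comm]
  conv_lhs => enter [2, i]; rw [Finset.sum_comm]

end SFM

open scoped InnerProductSpace in
/-- Strict monogamy of the singlet fraction: for every tripartite density matrix `ρ` on
A ⊗ B ⊗ C, `F(tr_C ρ) + F(tr_B ρ) < 2`; equivalently, the reduced states on A ⊗ B and
A ⊗ C cannot both be maximally entangled. -/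
theorem singlet_fraction_monogamy (d : ℕ) (hd : 2 ≤ d) (ρ : Matrix (I3 d) (I3 d) ℂ)
    (hpsd : ρ.PosSemidef) (htr : ρ.trace = 1) :
    (singletFraction d (trC d ρ)).re + (singletFraction d (trB d ρ)).re < 2 := by
  classical
  obtain ⟨B, hB⟩ : ∃ B : Matrix (I3 d) (I3 d) ℂ, ρ = Bᴴ * B := by
    open scoped MatrixOrder in exact CStarAlgebra.nonneg_iff_eq_star_mul_self.mp hpsd.nonneg
  set Y : I3 d → EuclideanSpace ℂ (I3 d) := fun j => WithLp.toLp 2 (fun k => star (B j k)) with hY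
  have hquad : ∀ u : I3 d → ℂ,
      star u ⬝ᵥ ρ.mulVec u = ∑ j : I3 d, (starRingEnd ℂ) (B.mulVec u j) * (B.mulVec u j) := by
    intro u
    rw [hB, ← Matrix.mulVec_mulVec, Matrix.dotProduct_mulVec, ← Matrix.star_mulVec]
    simp [dotProduct, RCLike.star_def]
  have hmv : ∀ (u : EuclideanSpace ℂ (I3 d)) (j : I3 d),
      B.mulVec (u : I3 d → ℂ) j = ⟪Y j, u⟫_ℂ := by
    intro u j
    simp only [PiLp.inner_apply, RCLike.inner_apply', hY, Matrix.mulVec, dotProduct]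
    simp [RCLike.star_def]
  have hre : ∀ z : ℂ, ((starRingEnd ℂ) z * z).re = ‖z‖^2 := by
    intro z
    rw [mul_comm, Complex.mul_conj, Complex.ofReal_re, Complex.normSq_eq_norm_sq]
  have h1 : ∀ c, (star ((SFM.U d c : I3 d → ℂ)) ⬝ᵥ ρ.mulVec ((SFM.U d c : I3 d → ℂ))).re
      = ∑ j : I3 d, ‖⟪SFM.U d c, Y j⟫_ℂ‖^2 := by
    intro c
    rw [hquad, Complex.re_sum]
    refine Finset.sum_congr rfl fun j _ => ?_
    rw [hmv (SFM.U d c) j, hre, norm_inner_symm]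
  have h2 : ∀ c, (star ((SFM.V d c : I3 d → ℂ)) ⬝ᵥ ρ.mulVec ((SFM.V d c : I3 d → ℂ))).re
      = ∑ j : I3 d, ‖⟪SFM.V d c, Y j⟫_ℂ‖^2 := by
    intro c
    rw [hquad, Complex.re_sum]
    refine Finset.sum_congr rfl fun j _ => ?_
    rw [hmv (SFM.V d c) j, hre, norm_inner_symm]
  have main : (singletFraction d (trC d ρ)).re + (singletFraction d (trB d ρ)).re
      = ∑ j : I3 d, ∑ c : Fin d, (‖⟪SFM.U d c, Y j⟫_ℂ‖^2 + ‖⟪SFM.V d c, Y j⟫_ℂ‖^2) := by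
    rw [SFM.sf_trC, SFM.sf_trB, Complex.re_sum, Complex.re_sum]
    simp only [h1, h2]
    rw [← Finset.sum_add_distrib, Finset.sum_comm]
    refine Finset.sum_congr rfl fun j _ => ?_
    rw [← Finset.sum_add_distrib]
  have trace_eq : ∑ j : I3 d, ‖Y j‖^2 = 1 := by
    have ht : ρ.trace = ∑ j : I3 d, ∑ k : I3 d, (starRingEnd ℂ) (B j k) * (B j k) := by
      rw [hB]
      simp only [Matrix.trace, Matrix.diag, Matrix.mul_apply, Matrix.conjTranspose_apply,
        RCLike.star_def]
      rw [Finset.sum_comm]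
    have h5 : ∀ j, ‖Y j‖^2 = ∑ k : I3 d, ((starRingEnd ℂ) (B j k) * (B j k)).re := by
      intro j
      rw [EuclideanSpace.norm_eq, Real.sq_sqrt (by positivity)]
      refine Finset.sum_congr rfl fun k _ => ?_
      rw [hre]
      simp [hY, norm_star]
    have : (ρ.trace).re = 1 := by rw [htr]; simp
    rw [ht, Complex.re_sum] at this
    rw [← this]
    refine Finset.sum_congr rfl fun j _ => ?_
    rw [h5, Complex.re_sum]
  have bound := fun j : I3 d => SFM.key_bound d hd (Y j)
  have hdR : (2:ℝ) ≤ (d:ℝ) := by exact_mod_cast hd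
  calc (singletFraction d (trC d ρ)).re + (singletFraction d (trB d ρ)).re
      = ∑ j : I3 d, ∑ c : Fin d, (‖⟪SFM.U d c, Y j⟫_ℂ‖^2 + ‖⟪SFM.V d c, Y j⟫_ℂ‖^2) := main
    _ ≤ ∑ j : I3 d, (1 + ((d:ℝ))⁻¹) * ‖Y j‖^2 := Finset.sum_le_sum fun j _ => bound j
    _ = (1 + ((d:ℝ))⁻¹) * ∑ j : I3 d, ‖Y j‖^2 := by rw [Finset.mul_sum]
    _ = 1 + ((d:ℝ))⁻¹ := by rw [trace_eq, mul_one]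
    _ < 2 := by
        have : ((d:ℝ))⁻¹ ≤ 1/2 := by
          rw [inv_le_comm₀ (by linarith) (by norm_num)]
          simpa using hdR
        linarith
end
end
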